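/- Let f : ℝ × [0,∞) → ℝ be such that f(·,t) is twice continuously differentiable and μ-strongly convex in x (so the second derivative H(x,t) ≥ μ > 0), and suppose |∂(∂f/∂x)/∂t (x,t)| ≤ κ for all x, t. Define x(λ, t) = argmax_x (λx − f(x,t)) and g(λ, t) = λ d(t) − f*(λ, t) where f*(λ,t) = sup_x(λx − f(x,t)) and d : [0,∞) → ℝ is differentiable with |d'(t)| ≤ δ. Then |∂(∂g/∂λ)/∂t (λ, t)| ≤ κ/μ + δ for all λ, t. -/
import Mathlib
open Topology


theorem dual_gradient_time_derivative_bound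
    (f fx fxx fxt : ℝ → ℝ → ℝ)   -- f(x,t), ∂f/∂x, ∂²f/∂x², ∂²f/∂x∂t
    (μ κ δ : ℝ) (hμ : 0 < μ)
    (hfx : ∀ x t, 0 ≤ t → HasDerivAt (fun y => f y t) (fx x t) x)
    (hfxx : ∀ x t, 0 ≤ t → HasDerivAt (fun y => fx y t) (fxx x t) x)
    (hfxt : ∀ x t, 0 ≤ t → HasDerivAt (fun s => fx x s) (fxt x t) t)
    (hH : ∀ x t, 0 ≤ t → μ ≤ fxx x t)
    (hκ : ∀ x t, 0 ≤ t → |fxt x t| ≤ κ)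
    (d d' : ℝ → ℝ)
    (hd : ∀ t, 0 ≤ t → HasDerivAt d (d' t) t)
    (hδ : ∀ t, 0 ≤ t → |d' t| ≤ δ)
    (X : ℝ → ℝ → ℝ)   -- X lam t = argmax_x (lam*x - f(x,t))
    (hX : ∀ lam t, 0 ≤ t → ∀ x, lam * x - f x t ≤ lam * X lam t - f (X lam t) t)
    (Xt : ℝ → ℝ → ℝ)
    (hXt : ∀ lam t, 0 ≤ t → HasDerivAt (fun s => X lam s) (Xt lam t) t) :
    -- ∂g/∂λ (λ,t) = d(t) - X(λ,t), so ∂(∂g/∂λ)/∂t = d'(t) - ∂X/∂t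
    ∀ lam t, 0 ≤ t → |d' t - Xt lam t| ≤ κ / μ + δ := by
  intro lam t ht
  -- first-order condition: fx (X lam s) s = lam for s ≥ 0
  have foc : ∀ s, 0 ≤ s → fx (X lam s) s = lam := by
    intro s hs
    have hmax : IsLocalMax (fun x => lam * x - f x s) (X lam s) :=
      Filter.Eventually.of_forall (hX lam s hs)
    have hderiv : HasDerivAt (fun x => lam * x - f x s) (lam * 1 - fx (X lam s) s) (X lam s) :=
      ((hasDerivAt_id (X lam s)).const_mul lam).sub (hfx (X lam s) s hs)
    have h0 := hmax.hasDerivAt_eq_zero hderiv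
    linarith
  -- strong monotonicity in x
  have mono : ∀ s, 0 ≤ s → ∀ a b : ℝ, a ≤ b → μ * (b - a) ≤ fx b s - fx a s := by
    intro s hs a b hab
    rcases eq_or_lt_of_le hab with rfl | hab
    · simp
    · have hcont : ContinuousOn (fun x => fx x s) (Set.Icc a b) := fun x _ =>
        ((hfxx x s hs).continuousAt).continuousWithinAt
      obtain ⟨c, _, hc⟩ := exists_hasDerivAt_eq_slope (fun x => fx x s) (fun x => fxx x s)
        hab hcont (fun x _ => hfxx x s hs)
      have hcμ : μ ≤ (fx b s - fx a s) / (b - a) := hc ▸ hH c s hs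
      have := (le_div_iff₀ (by linarith)).mp hcμ
      linarith
  have monoAbs : ∀ s, 0 ≤ s → ∀ a b : ℝ, μ * |b - a| ≤ |fx b s - fx a s| := by
    intro s hs a b
    rcases le_total a b with h | h
    · calc μ * |b - a| = μ * (b - a) := by rw [abs_of_nonneg (by linarith)]
        _ ≤ fx b s - fx a s := mono s hs a b h
        _ ≤ |fx b s - fx a s| := le_abs_self _
    · calc μ * |b - a| = μ * (a - b) := by rw [abs_of_nonpos (by linarith), neg_sub]
        _ ≤ fx a s - fx b s := mono s hs b a h
        _ ≤ |fx b s - fx a s| := by rw [abs_sub_comm]; exact le_abs_self _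
  -- Lipschitz in time of fx x ·
  have lipT : ∀ x : ℝ, ∀ s1 ∈ Set.Ici (0:ℝ), ∀ s2 ∈ Set.Ici (0:ℝ),
      |fx x s2 - fx x s1| ≤ κ * |s2 - s1| := by
    intro x s1 hs1 s2 hs2
    have := (convex_Ici (0:ℝ)).norm_image_sub_le_of_norm_hasDerivWithin_le
      (f := fun s => fx x s) (f' := fun s => fxt x s) (C := κ)
      (fun s hs => (hfxt x s hs).hasDerivWithinAt)
      (fun s hs => by simpa [Real.norm_eq_abs] using hκ x s hs) hs1 hs2
    simpa [Real.norm_eq_abs] using this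
  have hκμ : 0 ≤ κ / μ := by
    have : (0:ℝ) ≤ κ := le_trans (abs_nonneg _) (hκ 0 0 le_rfl)
    positivity
  -- Lipschitz of X lam on [0,∞)
  have lipX : ∀ s1 ∈ Set.Ici (0:ℝ), ∀ s2 ∈ Set.Ici (0:ℝ),
      |X lam s2 - X lam s1| ≤ κ / μ * |s2 - s1| := by
    intro s1 hs1 s2 hs2
    have h1 : μ * |X lam s2 - X lam s1| ≤ |fx (X lam s2) s2 - fx (X lam s1) s2| :=
      monoAbs s2 hs2 (X lam s1) (X lam s2)
    have h2 : fx (X lam s2) s2 - fx (X lam s1) s2 = fx (X lam s1) s1 - fx (X lam s1) s2 := by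
      rw [foc s2 hs2, foc s1 hs1]
    have h3 : |fx (X lam s1) s1 - fx (X lam s1) s2| ≤ κ * |s1 - s2| :=
      lipT (X lam s1) s2 hs2 s1 hs1
    rw [h2] at h1
    rw [abs_sub_comm s1 s2] at h3
    rw [div_mul_eq_mul_div, le_div_iff₀ hμ, mul_comm _ μ]
    linarith
  -- derivative bound via slope limit within [0,∞)
  have hXtb : |Xt lam t| ≤ κ / μ := by
    have hW : HasDerivWithinAt (fun s => X lam s) (Xt lam t) (Set.Ici 0) t :=
      (hXt lam t ht).hasDerivWithinAt
    have htend := hasDerivWithinAt_iff_tendsto_slope.mp hW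
    have hne : (nhdsWithin t (Set.Ici (0:ℝ) \ {t})).NeBot := by
      refine Filter.neBot_of_le (f := nhdsWithin t (Set.Ioi t)) (nhdsWithin_mono t ?_)
      intro s hs
      exact ⟨le_trans ht (le_of_lt hs), ne_of_gt hs⟩
    refine le_of_tendsto htend.abs ?_
    filter_upwards [self_mem_nhdsWithin] with s hs
    obtain ⟨hs0, hst⟩ := hs
    have hst' : s - t ≠ 0 := sub_ne_zero.mpr hst
    rw [slope_def_field, abs_div, div_le_iff₀ (abs_pos.mpr hst')]
    exact lipX t ht s hs0
  calc |d' t - Xt lam t| ≤ |d' t| + |Xt lam t| := abs_sub _ _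
    _ ≤ κ / μ + δ := by have := hδ t ht; linarith
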